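/- Suppose 0 < γ < 1. Then in any equilibrium (S_t), the normalized housing expenditure satisfies liminf_{t→∞} G^{−t}·S_t < e1; that is, the young's saving rate does not converge to zero: it cannot happen that S_t/(e1·G^t) → 1. -/

import Mathlib

open Real Filter Set Topology

/-- Assumption C: `c` is a positive, homogeneous of degree 1, twice continuously
differentiable function on `(0,∞)²` with partial derivatives `cy, cz > 0`, second partial
derivatives `cyy, czz < 0`, and Inada conditions. -/
structure AssumptionC (c cy cz cyy cyz czz : ℝ → ℝ → ℝ) : Prop where
  c_pos : ∀ ⦃y z : ℝ⦄, 0 < y → 0 < z → 0 < c y z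
  homog : ∀ ⦃l y z : ℝ⦄, 0 < l → 0 < y → 0 < z → c (l * y) (l * z) = l * c y z
  hderiv_y : ∀ ⦃y z : ℝ⦄, 0 < y → 0 < z → HasDerivAt (fun u => c u z) (cy y z) y
  hderiv_z : ∀ ⦃y z : ℝ⦄, 0 < y → 0 < z → HasDerivAt (fun v => c y v) (cz y z) z
  hderiv_yy : ∀ ⦃y z : ℝ⦄, 0 < y → 0 < z → HasDerivAt (fun u => cy u z) (cyy y z) y
  hderiv_yz : ∀ ⦃y z : ℝ⦄, 0 < y → 0 < z → HasDerivAt (fun v => cy y v) (cyz y z) z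
  hderiv_zy : ∀ ⦃y z : ℝ⦄, 0 < y → 0 < z → HasDerivAt (fun u => cz u z) (cyz y z) y
  hderiv_zz : ∀ ⦃y z : ℝ⦄, 0 < y → 0 < z → HasDerivAt (fun v => cz y v) (czz y z) z
  cy_pos : ∀ ⦃y z : ℝ⦄, 0 < y → 0 < z → 0 < cy y z
  cz_pos : ∀ ⦃y z : ℝ⦄, 0 < y → 0 < z → 0 < cz y z
  cyy_neg : ∀ ⦃y z : ℝ⦄, 0 < y → 0 < z → cyy y z < 0
  czz_neg : ∀ ⦃y z : ℝ⦄, 0 < y → 0 < z → czz y z < 0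
  cont2 : ContinuousOn (fun p : ℝ × ℝ => (cyy p.1 p.2, cyz p.1 p.2, czz p.1 p.2))
    {p : ℝ × ℝ | 0 < p.1 ∧ 0 < p.2}
  inada_y : ∀ ⦃z : ℝ⦄, 0 < z → Tendsto (fun y => cy y z) (𝓝[>] (0:ℝ)) atTop
  inada_z : ∀ ⦃y : ℝ⦄, 0 < y → Tendsto (fun z => cz y z) (𝓝[>] (0:ℝ)) atTop

/-- An equilibrium: `0 < S t < e1·G^t` and the difference equation
`S_{t+1}·c_z = S_t·c_y − m·c^γ` at `(y_t, z_t) = (e1·G^t − S_t, e2·G^{t+1} + S_{t+1})`. -/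
def IsEquilibrium (c cy cz : ℝ → ℝ → ℝ) (e1 e2 G γ m : ℝ) (S : ℕ → ℝ) : Prop :=
  ∀ t : ℕ, 0 < S t ∧ S t < e1 * G ^ t ∧
    S (t + 1) * cz (e1 * G ^ t - S t) (e2 * G ^ (t + 1) + S (t + 1)) =
      S t * cy (e1 * G ^ t - S t) (e2 * G ^ (t + 1) + S (t + 1)) -
        m * c (e1 * G ^ t - S t) (e2 * G ^ (t + 1) + S (t + 1)) ^ γ

/-- The rent `r_t = m·c(y_t,z_t)^γ / c_y(y_t,z_t)`. -/
noncomputable def rent (c cy : ℝ → ℝ → ℝ) (e1 e2 G γ m : ℝ) (S : ℕ → ℝ) (t : ℕ) : ℝ :=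
  m * c (e1 * G ^ t - S t) (e2 * G ^ (t + 1) + S (t + 1)) ^ γ /
    cy (e1 * G ^ t - S t) (e2 * G ^ (t + 1) + S (t + 1))

/-- The housing price `P_t = S_t − r_t`. -/
noncomputable def price (c cy : ℝ → ℝ → ℝ) (e1 e2 G γ m : ℝ) (S : ℕ → ℝ) (t : ℕ) : ℝ :=
  S t - rent c cy e1 e2 G γ m S t

/-- The gross interest rate `R_t = S_{t+1}/P_t`. -/
noncomputable def irate (c cy : ℝ → ℝ → ℝ) (e1 e2 G γ m : ℝ) (S : ℕ → ℝ) (t : ℕ) : ℝ :=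
  S (t + 1) / price c cy e1 e2 G γ m S t

-- monotone in first arg
lemma c_mono_y {c cy cz cyy cyz czz : ℝ → ℝ → ℝ} (hC : AssumptionC c cy cz cyy cyz czz)
    {y1 y2 z : ℝ} (h1 : 0 < y1) (h12 : y1 ≤ y2) (hz : 0 < z) : c y1 z ≤ c y2 z := by
  rcases eq_or_lt_of_le h12 with rfl | hlt
  · exact le_rfl
  have hmono : StrictMonoOn (fun u => c u z) (Icc y1 y2) := by
    apply strictMonoOn_of_deriv_pos (convex_Icc y1 y2)
    · intro x hx
      exact (hC.hderiv_y (h1.trans_le hx.1) hz).continuousAt.continuousWithinAt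
    · intro x hx
      rw [interior_Icc] at hx
      rw [(hC.hderiv_y (h1.trans hx.1) hz).deriv]
      exact hC.cy_pos (h1.trans hx.1) hz
  exact (hmono (left_mem_Icc.2 h12) (right_mem_Icc.2 h12) hlt).le

lemma c_mono_z {c cy cz cyy cyz czz : ℝ → ℝ → ℝ} (hC : AssumptionC c cy cz cyy cyz czz)
    {y z1 z2 : ℝ} (hy : 0 < y) (h1 : 0 < z1) (h12 : z1 ≤ z2) : c y z1 ≤ c y z2 := by
  rcases eq_or_lt_of_le h12 with rfl | hlt
  · exact le_rfl
  have hmono : StrictMonoOn (fun v => c y v) (Icc z1 z2) := by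
    apply strictMonoOn_of_deriv_pos (convex_Icc z1 z2)
    · intro x hx
      exact (hC.hderiv_z hy (h1.trans_le hx.1)).continuousAt.continuousWithinAt
    · intro x hx
      rw [interior_Icc] at hx
      rw [(hC.hderiv_z hy (h1.trans hx.1)).deriv]
      exact hC.cz_pos hy (h1.trans hx.1)
  exact (hmono (left_mem_Icc.2 h12) (right_mem_Icc.2 h12) hlt).le

-- z * cz ≤ c
lemma z_cz_le_c {c cy cz cyy cyz czz : ℝ → ℝ → ℝ} (hC : AssumptionC c cy cz cyy cyz czz)
    {y z : ℝ} (hy : 0 < y) (hz : 0 < z) : z * cz y z ≤ c y z := by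
  by_contra hcon
  push_neg at hcon
  have hcz := hC.cz_pos hy hz
  set ε : ℝ := min (z/2) ((z * cz y z - c y z)/(2 * cz y z)) with hεdef
  have hε : 0 < ε := by
    apply lt_min (by linarith)
    apply div_pos (by linarith) (by linarith)
  have hεz : ε < z := lt_of_le_of_lt (min_le_left _ _) (by linarith)
  obtain ⟨ξ, hξ, hslope⟩ := exists_hasDerivAt_eq_slope (fun v => c y v) (fun v => cz y v) hεz
    (fun x hx => (hC.hderiv_z hy (hε.trans_le hx.1)).continuousAt.continuousWithinAt)
    (fun x hx => hC.hderiv_z hy (hε.trans hx.1))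
  have hξ0 : 0 < ξ := hε.trans hξ.1
  have hanti : StrictAntiOn (fun v => cz y v) (Icc ξ z) := by
    apply strictAntiOn_of_deriv_neg (convex_Icc ξ z)
    · intro x hx
      exact (hC.hderiv_zz hy (hξ0.trans_le hx.1)).continuousAt.continuousWithinAt
    · intro x hx
      rw [interior_Icc] at hx
      rw [(hC.hderiv_zz hy (hξ0.trans hx.1)).deriv]
      exact hC.czz_neg hy (hξ0.trans hx.1)
  have hle : cz y z < cz y ξ :=
    hanti (left_mem_Icc.2 hξ.2.le) (right_mem_Icc.2 hξ.2.le) hξ.2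
  have hcε : 0 < c y ε := hC.c_pos hy hε
  have heq : c y z - c y ε = cz y ξ * (z - ε) := by
    rw [hslope, div_mul_cancel₀]
    linarith
  have hεb : ε ≤ (z * cz y z - c y z)/(2 * cz y z) := min_le_right _ _
  have hεcz : ε * cz y z ≤ (z * cz y z - c y z)/2 := by
    rw [le_div_iff₀ (by linarith : (0:ℝ) < 2 * cz y z)] at hεb
    nlinarith
  have hprod : cz y z * (z - ε) < cz y ξ * (z - ε) := mul_lt_mul_of_pos_right hle (by linarith)
  nlinarith [hprod, heq, hcε, hεcz, hcon]


lemma cy_homog0 {c cy cz cyy cyz czz : ℝ → ℝ → ℝ} (hC : AssumptionC c cy cz cyy cyz czz)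
    {l y z : ℝ} (hl : 0 < l) (hy : 0 < y) (hz : 0 < z) : cy (l * y) (l * z) = cy y z := by
  have hlin : HasDerivAt (fun u : ℝ => l * u) l y := by
    simpa using (hasDerivAt_id y).const_mul l
  have h1 : HasDerivAt (fun u => c (l * u) (l * z)) (cy (l * y) (l * z) * l) y :=
    (hC.hderiv_y (by positivity) (by positivity)).comp y hlin
  have h2 : HasDerivAt (fun u => l * c u z) (l * cy y z) y :=
    (hC.hderiv_y hy hz).const_mul l
  have heq : (fun u => l * c u z) =ᶠ[𝓝 y] (fun u => c (l * u) (l * z)) := by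
    filter_upwards [eventually_gt_nhds hy] with u hu
    exact (hC.homog hl hu hz).symm
  have h2' : HasDerivAt (fun u => c (l * u) (l * z)) (l * cy y z) y :=
    h2.congr_of_eventuallyEq heq.symm
  have h3 := h1.unique h2'
  have := mul_left_cancel₀ hl.ne' (by linarith : l * cy (l * y) (l * z) = l * cy y z)
  exact this

lemma cy_ratio {c cy cz cyy cyz czz : ℝ → ℝ → ℝ} (hC : AssumptionC c cy cz cyy cyz czz)
    {y z : ℝ} (hy : 0 < y) (hz : 0 < z) : cy y z = cy (y / z) 1 := by
  have := cy_homog0 hC hz (div_pos hy hz) one_pos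
  rw [mul_div_cancel₀ _ hz.ne', mul_one] at this
  linarith [this]

set_option maxHeartbeats 2000000 in
/-- If `0 < γ < 1`, then in any equilibrium `liminf G^{−t}·S_t < e1`; in particular
the normalized housing expenditure `S_t/(e1·G^t)` does not converge to `1`. -/
theorem stmt_8 (c cy cz cyy cyz czz : ℝ → ℝ → ℝ)
    (hC : AssumptionC c cy cz cyy cyz czz) (e1 e2 G γ m : ℝ)
    (he1 : 0 < e1) (he2 : 0 < e2) (hG : 1 < G) (hγ0 : 0 < γ) (hγ1 : γ < 1) (hm : 0 < m)
    (S : ℕ → ℝ) (hS : IsEquilibrium c cy cz e1 e2 G γ m S) :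
    liminf (fun t : ℕ => G ^ (-(t : ℝ)) * S t) atTop < e1 ∧
    ¬ Tendsto (fun t : ℕ => S t / (e1 * G ^ t)) atTop (𝓝 1) := by
  have hG0 : (0:ℝ) < G := by linarith
  set a : ℕ → ℝ := fun t => G ^ (-(t:ℝ)) * S t with ha
  have hSpos : ∀ t, 0 < S t := fun t => (hS t).1
  have hSlt : ∀ t, S t < e1 * G ^ t := fun t => (hS t).2.1
  have hGp : ∀ t : ℕ, (0:ℝ) < G ^ t := fun t => pow_pos hG0 t
  have ha' : ∀ t, a t = S t / G ^ t := by
    intro t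
    show G ^ (-(t:ℝ)) * S t = S t / G ^ t
    rw [Real.rpow_neg hG0.le, Real.rpow_natCast]
    field_simp
  have main : liminf a atTop < e1 := by
    by_contra hcon
    push_neg at hcon
    set y : ℕ → ℝ := fun t => e1 * G ^ t - S t with hydef
    set z : ℕ → ℝ := fun t => e2 * G ^ (t+1) + S (t+1) with hzdef
    have hy : ∀ t, 0 < y t := fun t => sub_pos.2 (hSlt t)
    have hz : ∀ t, 0 < z t := fun t => add_pos (mul_pos he2 (hGp (t+1))) (hSpos (t+1))
    have hG1 : ∀ t : ℕ, (1:ℝ) ≤ G ^ t := fun t => one_le_pow₀ hG.le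
    have hc11 : 0 < c 1 1 := hC.c_pos one_pos one_pos
    set C : ℝ := c 1 1 * (e1 + e2 * G + e1 * G) with hCdef
    have hC0 : 0 < C := by
      apply mul_pos hc11
      nlinarith
    have hcb : ∀ t, c (y t) (z t) ≤ C * G ^ t := by
      intro t
      have hyz : 0 < y t + z t := by linarith [hy t, hz t]
      have h1 : y t + z t ≤ (e1 + e2 * G + e1 * G) * G ^ t := by
        have hS1 := hSlt (t+1)
        have hS0 := hSpos t
        have hps : (G:ℝ) ^ (t+1) = G ^ t * G := pow_succ G t
        simp only [hydef, hzdef]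
        rw [hps] at hS1 ⊢
        nlinarith [hGp t]
      calc c (y t) (z t) ≤ c (y t + z t) (z t) :=
            c_mono_y hC (hy t) (le_add_of_nonneg_right (hz t).le) (hz t)
        _ ≤ c (y t + z t) (y t + z t) :=
            c_mono_z hC hyz (hz t) (le_add_of_nonneg_left (hy t).le)
        _ = (y t + z t) * c 1 1 := by
            have h := hC.homog hyz one_pos one_pos
            rwa [mul_one] at h
        _ ≤ C * G ^ t := by rw [hCdef]; nlinarith
    have hrb : ∀ t, m * c (y t) (z t) ^ γ ≤ m * ((1 + C) * G ^ t) := by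
      intro t
      have h1 : c (y t) (z t) ^ γ ≤ (C * G ^ t) ^ γ :=
        Real.rpow_le_rpow (hC.c_pos (hy t) (hz t)).le (hcb t) hγ0.le
      have h2 : (C * G ^ t) ^ γ = C ^ γ * (G ^ t : ℝ) ^ γ := Real.mul_rpow hC0.le (hGp t).le
      have h3 : (G ^ t : ℝ) ^ γ ≤ G ^ t := by
        calc (G ^ t : ℝ) ^ γ ≤ (G ^ t : ℝ) ^ (1:ℝ) :=
              Real.rpow_le_rpow_of_exponent_le (hG1 t) hγ1.le
          _ = G ^ t := Real.rpow_one _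
      have h4 : C ^ γ ≤ 1 + C := by
        rcases le_or_gt C 1 with h | h
        · have := Real.rpow_le_one hC0.le h hγ0.le
          linarith
        · have : C ^ γ ≤ C ^ (1:ℝ) := Real.rpow_le_rpow_of_exponent_le h.le hγ1.le
          rw [Real.rpow_one] at this
          linarith
      have h5 : C ^ γ * (G ^ t : ℝ) ^ γ ≤ (1 + C) * G ^ t := by
        have hg0 : (0:ℝ) ≤ (G ^ t : ℝ) ^ γ := Real.rpow_nonneg (hGp t).le _
        nlinarith [Real.rpow_nonneg hC0.le γ, hGp t]
      have : c (y t) (z t) ^ γ ≤ (1 + C) * G ^ t := by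
        rw [h2] at h1; linarith
      nlinarith
    set K : ℝ := (C + m * (1 + C)) / (e1 / 2) with hKdef
    have hkey : ∀ t, (e1 / 2) * G ^ t ≤ S t → cy (y t) (z t) ≤ K := by
      intro t hSt
      have heq := (hS t).2.2
      have hczp := hC.cz_pos (hy t) (hz t)
      have hcyp := hC.cy_pos (hy t) (hz t)
      have h1 : S (t+1) * cz (y t) (z t) ≤ c (y t) (z t) := by
        have h2 : S (t+1) ≤ z t := by
          simp only [hzdef]
          nlinarith [mul_pos he2 (hGp (t+1))]
        calc S (t+1) * cz (y t) (z t) ≤ z t * cz (y t) (z t) :=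
              mul_le_mul_of_nonneg_right h2 hczp.le
          _ ≤ c (y t) (z t) := z_cz_le_c hC (hy t) (hz t)
      have h3 : S t * cy (y t) (z t) ≤ (C + m * (1 + C)) * G ^ t := by
        have hb1 := hrb t
        have hb2 := hcb t
        change S (t+1) * cz (y t) (z t) = S t * cy (y t) (z t) - m * c (y t) (z t) ^ γ at heq
        nlinarith [heq, h1]
      have he12 : (0:ℝ) < e1 / 2 := by linarith
      rw [hKdef, le_div_iff₀ he12]
      have h5 : (e1 / 2) * G ^ t * cy (y t) (z t) ≤ (C + m * (1 + C)) * G ^ t :=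
        le_trans (mul_le_mul_of_nonneg_right hSt hcyp.le) h3
      have h6 : cy (y t) (z t) * (e1 / 2) * G ^ t ≤ (C + m * (1 + C)) * G ^ t := by
        nlinarith [h5]
      exact (mul_le_mul_iff_of_pos_right (hGp t)).mp h6
    have hev : ∀ᶠ u in 𝓝[>] (0:ℝ), K + 1 ≤ cy u 1 :=
      (hC.inada_y one_pos).eventually (eventually_ge_atTop (K + 1))
    obtain ⟨δ, hδ0, hδ⟩ : ∃ δ > 0, ∀ u : ℝ, 0 < u → u < δ → K + 1 ≤ cy u 1 := by
      rw [eventually_nhdsWithin_iff, Metric.eventually_nhds_iff] at hev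
      obtain ⟨δ, hδ0, h⟩ := hev
      refine ⟨δ, hδ0, fun u hu0 huδ => h ?_ hu0⟩
      rw [Real.dist_eq, sub_zero, abs_of_pos hu0]
      exact huδ
    set b : ℝ := max (e1 / 2) (e1 - δ * (e2 * G)) with hbdef
    have hb : b < e1 := by
      apply max_lt (by linarith)
      nlinarith [mul_pos hδ0 (mul_pos he2 hG0)]
    have hbdd : IsBoundedUnder (· ≥ ·) atTop a := by
      apply Filter.isBoundedUnder_of
      refine ⟨0, fun t => ?_⟩
      show (0:ℝ) ≤ a t
      rw [ha' t]
      exact div_nonneg (hSpos t).le (hGp t).le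
    have hevb : ∀ᶠ t in atTop, b < a t :=
      eventually_lt_of_lt_liminf (lt_of_lt_of_le hb hcon) hbdd
    obtain ⟨t, hta⟩ := hevb.exists
    have hat : b * G ^ t < S t := by
      rw [ha' t, lt_div_iff₀ (hGp t)] at hta
      linarith
    have hS2 : (e1 / 2) * G ^ t ≤ S t :=
      le_of_lt (lt_of_le_of_lt (mul_le_mul_of_nonneg_right (le_max_left _ _) (hGp t).le) hat)
    have hKb := hkey t hS2
    have hu : y t / z t < δ := by
      have hmax2 : e1 - δ * (e2 * G) ≤ b := le_max_right _ _
      have h1 : y t < δ * (e2 * G) * G ^ t := by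
        simp only [hydef]
        nlinarith [hat, mul_le_mul_of_nonneg_right hmax2 (hGp t).le]
      have h2 : e2 * G * G ^ t ≤ z t := by
        simp only [hzdef]
        rw [pow_succ]
        nlinarith [hSpos (t+1), hGp t]
      rw [div_lt_iff₀ (hz t)]
      nlinarith [mul_pos (mul_pos he2 hG0) (hGp t), hδ0]
    have hfinal : K + 1 ≤ cy (y t) (z t) := by
      rw [cy_ratio hC (hy t) (hz t)]
      exact hδ _ (div_pos (hy t) (hz t)) hu
    linarith
  refine ⟨main, ?_⟩
  intro htend
  have h1 : Tendsto a atTop (𝓝 e1) := by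
    have h2 := htend.const_mul e1
    rw [mul_one] at h2
    refine h2.congr fun t => ?_
    rw [ha' t]
    field_simp
  have h3 := h1.liminf_eq
  rw [h3] at main
  exact lt_irrefl _ main
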